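/- arXiv:1203.0328 — 2 statements merged into one kernel-verified Lean document; each statement's English description precedes it below -/
import Mathlib

section
/- Let μ and ν be two roots of a complex semisimple Lie algebra g. Then [g_μ, g_ν] = g_{μ+ν}; in particular, μ + ν is a root if and only if [ζ, ξ] ≠ 0 for every nonzero ζ ∈ g_μ and nonzero ξ ∈ g_ν. -/
open LieAlgebra LieModule Module

section Aux
variable {A : Type*} [LieRing A] [LieAlgebra ℂ A] [FiniteDimensional ℂ A]


/-- If the Killing form of `A` vanishes identically, then every weight of a Cartan subalgebra
vanishes on every coroot space of a nonzero weight. -/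
lemma weight_apply_eq_zero_of_killingForm_eq_zero
    (H : LieSubalgebra ℂ A) [H.IsCartanSubalgebra]
    (hκ : killingForm ℂ A = 0)
    (γ : Weight ℂ H A) (hγ : γ.IsNonZero) (β : Weight ℂ H A)
    {h : H} (hh : h ∈ corootSpace (⇑γ)) : β h = 0 := by
  have key : ∀ χ : Weight ℂ H A, ∃ a b : ℤ, 0 < b ∧
      ∀ x ∈ corootSpace (⇑γ), ((a • ⇑γ + b • ⇑χ) x : ℂ) = 0 := fun χ ↦
    exists_forall_mem_corootSpace_smul_add_eq_zero A (⇑γ) (⇑χ) hγ χ.genWeightSpace_ne_bot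
  choose a b hb hab using key
  have hrel : ∀ χ : Weight ℂ H A, (a χ : ℂ) * γ h + (b χ : ℂ) * χ h = 0 := by
    intro χ
    have := hab χ h hh
    simpa [zsmul_eq_mul] using this
  have hγh : γ h = 0 := by
    by_contra hne
    have h0 : LieModule.traceForm ℂ H A h h = 0 := by
      have : LieModule.traceForm ℂ H A h h = killingForm ℂ A (h : A) (h : A) := rfl
      rw [this, hκ]
      simp
    rw [traceForm_eq_sum_finrank_nsmul_mul ℂ H A h h] at h0
    -- each χ h = -(a χ / b χ) * γ h
    have hχh : ∀ χ : Weight ℂ H A, χ h = -((a χ : ℂ) / (b χ : ℂ)) * γ h := by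
      intro χ
      have hbχ : (b χ : ℂ) ≠ 0 := by exact_mod_cast (hb χ).ne'
      field_simp
      linear_combination (hrel χ)
    have h1 : ((∑ χ : Weight ℂ H A,
        (finrank ℂ (genWeightSpace A (⇑χ)) : ℚ) * ((a χ : ℚ) / (b χ : ℚ))^2 : ℚ) : ℂ)
        * (γ h)^2 = 0 := by
      rw [← h0]
      push_cast
      rw [Finset.sum_mul]
      refine Finset.sum_congr rfl fun χ _ ↦ ?_
      rw [hχh χ]
      have hbχ : (b χ : ℂ) ≠ 0 := by exact_mod_cast (hb χ).ne'
      field_simp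
      rw [nsmul_eq_mul, mul_div_assoc', mul_div_assoc', mul_div_cancel_left₀ _ (pow_ne_zero 2 hbχ), mul_assoc]
    have h2 : (∑ χ : Weight ℂ H A,
        (finrank ℂ (genWeightSpace A (⇑χ)) : ℚ) * ((a χ : ℚ) / (b χ : ℚ))^2 : ℚ) = 0 := by
      have := mul_eq_zero.mp h1
      rcases this with h' | h'
      · exact_mod_cast h'
      · exact absurd (pow_eq_zero_iff (n := 2) (by norm_num) |>.mp h') hne
    have h3 : ∀ χ : Weight ℂ H A, χ ∈ Finset.univ → (0:ℚ) ≤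
        (finrank ℂ (genWeightSpace A (⇑χ)) : ℚ) * ((a χ : ℚ) / (b χ : ℚ))^2 :=
      fun χ _ ↦ mul_nonneg (by positivity) (sq_nonneg _)
    have h4 := (Finset.sum_eq_zero_iff_of_nonneg h3).mp h2 γ (Finset.mem_univ _)
    have hfr : (0:ℚ) < (finrank ℂ (genWeightSpace A (⇑γ)) : ℚ) := by
      have : Nontrivial (genWeightSpace A (⇑γ)) := by
        rw [LieSubmodule.nontrivial_iff_ne_bot]; exact γ.genWeightSpace_ne_bot
      exact_mod_cast finrank_pos
    have h5 : ((a γ : ℚ) / (b γ : ℚ)) = 0 := by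
      rcases mul_eq_zero.mp h4 with h' | h'
      · exact absurd h' hfr.ne'
      · exact pow_eq_zero_iff (n := 2) (by norm_num) |>.mp h'
    have hbγ : (b γ : ℚ) ≠ 0 := by exact_mod_cast (hb γ).ne'
    have haγ : a γ = 0 := by
      field_simp at h5
      simpa using h5
    have := hrel γ
    rw [haγ] at this
    have hbγ' : (b γ : ℂ) ≠ 0 := by exact_mod_cast (hb γ).ne'
    simp only [Int.cast_zero, zero_mul, zero_add] at this
    exact hne (by simpa [hbγ'] using mul_eq_zero.mp this |>.resolve_left hbγ')
  -- now β h = 0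
  have := hrel β
  rw [hγh, mul_zero, zero_add] at this
  have hbβ : (b β : ℂ) ≠ 0 := by exact_mod_cast (hb β).ne'
  simpa [hbβ] using mul_eq_zero.mp this |>.resolve_left hbβ

lemma killingForm_ne_zero_of_isSimple [LieAlgebra.IsSimple ℂ A] :
    killingForm ℂ A ≠ 0 := by
  intro hκ
  haveI : Nontrivial A := by
    by_contra hnt
    rw [not_nontrivial_iff_subsingleton] at hnt
    exact IsSimple.non_abelian ℂ (L := A) ⟨fun u v => Subsingleton.elim _ _⟩
  -- the derived algebra is everything
  have hder : derivedSeries ℂ A 1 = ⊤ := by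
    rcases IsSimple.eq_bot_or_eq_top (derivedSeries ℂ A 1) with hd | hd
    · exfalso
      apply IsSimple.non_abelian ℂ (L := A)
      constructor
      intro u v
      have hm : ⁅u, v⁆ ∈ derivedSeries ℂ A 1 := by
        rw [derivedSeries_def, derivedSeriesOfIdeal_succ, derivedSeriesOfIdeal_zero]
        exact LieSubmodule.lie_mem_lie (LieSubmodule.mem_top _) (LieSubmodule.mem_top _)
      rw [hd] at hm
      exact (LieSubmodule.mem_bot _).mp hm
    · exact hd
  have not_solvable : ¬ LieAlgebra.IsSolvable A := fun hs ↦
    (derivedSeries_lt_top_of_solvable ℂ A).ne hder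
  -- pick a Cartan subalgebra
  obtain ⟨x, hx⟩ := exists_isCartanSubalgebra_engel ℂ A
  set H : LieSubalgebra ℂ A := LieSubalgebra.engel ℂ x with hH
  haveI : H.IsCartanSubalgebra := hx
  -- there is a nonzero weight
  have hexists : ∃ α : Weight ℂ H A, α.IsNonZero := by
    by_contra hcon
    push_neg at hcon
    have htop' : (⊤ : LieSubmodule ℂ H A) ≤ genWeightSpace A (0 : H → ℂ) := by
      rw [← iSup_genWeightSpace_eq_top ℂ H A]
      refine iSup_le fun χ => ?_
      by_cases hbot : genWeightSpace A χ = ⊥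
      · rw [hbot]; exact bot_le
      · have hz : (⟨χ, hbot⟩ : Weight ℂ H A).IsZero := hcon ⟨χ, hbot⟩
        have : χ = 0 := hz
        rw [this]
    have hAH : ∀ a : A, a ∈ H := by
      intro a
      have ha := htop' (LieSubmodule.mem_top a)
      have hzz : genWeightSpace A (0 : H → ℂ) = H.toLieSubmodule := rootSpace_zero_eq ℂ A H
      rw [hzz, LieSubalgebra.mem_toLieSubmodule] at ha
      exact ha
    have hsurj : Function.Surjective H.incl := fun a => ⟨⟨a, hAH a⟩, rfl⟩
    exact not_solvable (hsurj.lieAlgebra_isSolvable)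
  obtain ⟨α, hα⟩ := hexists
  -- the submodule U
  set Sv : Submodule ℂ A :=
    ⨆ (χ : Weight ℂ H A) (_ : χ.IsNonZero), (genWeightSpace A (⇑χ) : Submodule ℂ A) with hSv
  set W : Submodule ℂ A := Submodule.map (H : Submodule ℂ A).subtype α.ker with hW
  set U : Submodule ℂ A := W ⊔ Sv with hU
  have hSle : ∀ (χ : H → ℂ), χ ≠ 0 → (genWeightSpace A χ : Submodule ℂ A) ≤ U := by
    intro χ hχ
    by_cases hbot : genWeightSpace A χ = ⊥
    · rw [hbot]; simp
    · refine le_trans ?_ le_sup_right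
      exact le_iSup₂_of_le (⟨χ, hbot⟩ : Weight ℂ H A) hχ le_rfl
  have hlie : ∀ u v : A, ⁅u, v⁆ ∈ U := by
    intro u v
    have hu : u ∈ ⨆ χ : H → ℂ, genWeightSpace A χ := by
      simp [iSup_genWeightSpace_eq_top]
    have hv : v ∈ ⨆ χ : H → ℂ, genWeightSpace A χ := by
      simp [iSup_genWeightSpace_eq_top]
    induction hu using LieSubmodule.iSup_induction' with
    | zero => simp
    | add _ _ _ _ h h' => rw [add_lie]; exact U.add_mem h h'
    | mem χ₁ u hu =>
      induction hv using LieSubmodule.iSup_induction' with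
      | zero => simp
      | add _ _ _ _ h h' => rw [lie_add]; exact U.add_mem h h'
      | mem χ₂ v hv =>
        have hbr : ⁅u, v⁆ ∈ genWeightSpace A (χ₁ + χ₂) :=
          mapsTo_toEnd_genWeightSpace_add_of_mem_rootSpace ℂ A H A χ₁ χ₂ hu hv
        by_cases hzero : χ₁ + χ₂ = 0
        · by_cases hχ₁ : χ₁ = 0
          · -- both weights zero: u, v ∈ H
            have hχ₂ : χ₂ = 0 := by rwa [hχ₁, zero_add] at hzero
            have hzz : genWeightSpace A (0 : H → ℂ) = H.toLieSubmodule := rootSpace_zero_eq ℂ A H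
            rw [hχ₁, hzz, LieSubalgebra.mem_toLieSubmodule] at hu
            rw [hχ₂, hzz, LieSubalgebra.mem_toLieSubmodule] at hv
            refine Submodule.mem_sup_left (show ⁅u, v⁆ ∈ W from ?_)
            refine ⟨⁅(⟨u, hu⟩ : H), (⟨v, hv⟩ : H)⁆, ?_, rfl⟩
            simp [Weight.apply_lie]
            exact Weight.apply_lie (χ := α) _ _
          · by_cases hbot₁ : genWeightSpace A χ₁ = ⊥
            · have hu0 : u = 0 := by rw [hbot₁] at hu; simpa using hu
              simp [hu0]
            · have hχ₂ : χ₂ = -χ₁ := eq_neg_of_add_eq_zero_right hzero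
              set γ : Weight ℂ H A := ⟨χ₁, hbot₁⟩ with hγdef
              have h0' : ⁅u, v⁆ ∈ H.toLieSubmodule := by
                have hzz : genWeightSpace A (0 : H → ℂ) = H.toLieSubmodule := rootSpace_zero_eq ℂ A H
                rw [← hzz, ← hzero]; exact hbr
              rw [LieSubalgebra.mem_toLieSubmodule] at h0'
              have hcr : (⟨⁅u, v⁆, h0'⟩ : H) ∈ corootSpace (⇑γ) := by
                rw [mem_corootSpace]
                exact Submodule.subset_span ⟨u, hu, v, by rwa [hχ₂] at hv, rfl⟩
              have hαz := weight_apply_eq_zero_of_killingForm_eq_zero H hκ γ hχ₁ α hcr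
              exact Submodule.mem_sup_left (show ⁅u, v⁆ ∈ W from ⟨⟨⁅u, v⁆, h0'⟩, hαz, rfl⟩)
        · exact hSle (χ₁ + χ₂) hzero hbr
  -- U = ⊤ since derived algebra is everything
  have htopU : (⊤ : Submodule ℂ A) ≤ U := by
    have h1 : (LieSubmodule.toSubmodule (derivedSeries ℂ A 1)) = ⊤ := by
      rw [hder]; rfl
    have h2 : (LieSubmodule.toSubmodule (derivedSeries ℂ A 1)) = Submodule.span ℂ
        {m : A | ∃ y ∈ (⊤ : LieIdeal ℂ A), ∃ n ∈ (⊤ : LieIdeal ℂ A), ⁅y, n⁆ = m} := by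
      rw [derivedSeries_def, derivedSeriesOfIdeal_succ, derivedSeriesOfIdeal_zero]
      exact LieSubmodule.lieIdeal_oper_eq_linear_span' ⊤ ⊤
    rw [← h1, h2, Submodule.span_le]
    rintro m ⟨u, -, v, -, rfl⟩
    exact hlie u v
  -- but U misses an element of H on which α does not vanish
  obtain ⟨h₀, hh₀⟩ : ∃ h₀ : H, α h₀ ≠ 0 := by
    by_contra hc
    push_neg at hc
    exact hα (funext hc)
  obtain ⟨w, hw, s, hs, hws⟩ := Submodule.mem_sup.mp (htopU (Submodule.mem_top (x := (h₀ : A))))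
  have hind := iSupIndep_genWeightSpace ℂ H A
  have hdisj : Disjoint ((genWeightSpace A (0 : H → ℂ)) : Submodule ℂ A)
      (⨆ (χ : H → ℂ) (_ : χ ≠ 0), ((genWeightSpace A χ) : Submodule ℂ A)) := by
    have := hind (0 : H → ℂ)
    rw [← LieSubmodule.disjoint_toSubmodule] at this
    convert this using 2
    simp [LieSubmodule.iSup_toSubmodule]
  have hsH : s ∈ ((genWeightSpace A (0 : H → ℂ)) : Submodule ℂ A) := by
    have hwH : w ∈ H := by
      obtain ⟨w', -, rfl⟩ := hw
      exact w'.2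
    have hsH' : s ∈ H := by
      have : s = (h₀ : A) - w := by rw [← hws]; abel
      rw [this]
      exact H.toSubmodule.sub_mem h₀.2 hwH
    have hzz : genWeightSpace A (0 : H → ℂ) = H.toLieSubmodule := rootSpace_zero_eq ℂ A H
    rw [hzz]
    exact hsH'
  have hsS : s ∈ ⨆ (χ : H → ℂ) (_ : χ ≠ 0), ((genWeightSpace A χ) : Submodule ℂ A) := by
    refine (iSup₂_le_iff.mpr ?_ : Sv ≤ _) hs
    intro χ hχ
    exact le_iSup₂_of_le (⇑χ) hχ le_rfl
  have hs0 : s = 0 := by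
    have := hdisj.le_bot (Submodule.mem_inf.mpr ⟨hsH, hsS⟩)
    simpa using this
  have : (h₀ : A) ∈ W := by rw [← hws, hs0, add_zero]; exact hw
  obtain ⟨h₁, hk, hcoe⟩ := this
  have : h₁ = h₀ := Subtype.ext hcoe
  rw [this] at hk
  exact hh₀ hk

end Aux

lemma isKilling_of_isSemisimple (L : Type*) [LieRing L] [LieAlgebra ℂ L]
    [FiniteDimensional ℂ L] [LieAlgebra.IsSemisimple ℂ L] :
    LieAlgebra.IsKilling ℂ L := by
  constructor
  rcases eq_bot_or_exists_atom_le (LieIdeal.killingCompl ℂ L ⊤) with h | ⟨J, hJ, hJI⟩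
  · exact h
  · exfalso
    haveI := LieAlgebra.IsSemisimple.isSimple_of_isAtom J hJ
    apply killingForm_ne_zero_of_isSimple (A := J)
    rw [LieIdeal.killingForm_eq]
    ext y z
    have hz : (z : L) ∈ LieIdeal.killingCompl ℂ L ⊤ := hJI z.2
    rw [LieIdeal.mem_killingCompl] at hz
    exact hz (y : L) (LieSubmodule.mem_top _)

section Key

open LieAlgebra.IsKilling

variable {L : Type*} [LieRing L] [LieAlgebra ℂ L] [FiniteDimensional ℂ L]
  [LieAlgebra.IsKilling ℂ L]
  (H : LieSubalgebra ℂ L) [H.IsCartanSubalgebra]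

lemma lie_ne_zero_key (μ ν : Weight ℂ H L) (hμ : μ.IsNonZero) (hν : ν.IsNonZero)
    (hsum : rootSpace H (⇑μ + ⇑ν) ≠ ⊥)
    {ζ ξ : L} (hζ : ζ ∈ rootSpace H ⇑μ) (hζ0 : ζ ≠ 0)
    (hξ : ξ ∈ rootSpace H ⇑ν) (hξ0 : ξ ≠ 0) : ⁅ζ, ξ⁆ ≠ 0 := by
  obtain ⟨h, e, f, isSl2, he, hf⟩ := exists_isSl2Triple_of_weight_isNonZero hμ
  obtain rfl := isSl2.h_eq_coroot hμ he hf
  obtain ⟨x, hx, x_ne0⟩ := (chainTop μ ν).exists_ne_zero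
  have prim : isSl2.HasPrimitiveVectorWith x (chainLength μ ν : ℂ) :=
    have := lie_mem_genWeightSpace_of_mem_genWeightSpace he hx
    ⟨x_ne0, (chainLength_smul _ _ hx).symm, by rwa [genWeightSpace_add_chainTop _ _ hμ] at this⟩
  have hk1 : 1 ≤ chainTopCoeff μ ν := by
    have h1 := (rootSpace_zsmul_add_ne_bot_iff μ ν hμ 1).mp (by
      simpa using hsum)
    exact_mod_cast h1.1
  have hklen : chainTopCoeff μ ν ≤ chainLength μ ν := chainTopCoeff_le_chainLength μ ν
  set k := chainTopCoeff μ ν with hk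
  -- the k-th power of f applied to the chain top vector
  have hψmem : ((toEnd ℂ L L f) ^ k) x ∈ rootSpace H ⇑ν := by
    have hmem := toEnd_pow_apply_mem hf hx k
    have harg : (k • (-⇑μ) + ⇑(chainTop μ ν) : H → ℂ) = ⇑ν := by
      rw [coe_chainTop]
      ext y
      simp only [Pi.add_apply, Pi.smul_apply, Pi.neg_apply, smul_eq_mul, zsmul_eq_mul,
        Pi.mul_apply, Pi.intCast_apply, Pi.natCast_apply]
      push_cast
      ring
    rwa [harg] at hmem
  have hψ0 : ((toEnd ℂ L L f) ^ k) x ≠ 0 := prim.pow_toEnd_f_ne_zero_of_eq_nat rfl hklen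
  obtain ⟨c, hc⟩ := (finrank_eq_one_iff_of_nonzero' (⟨_, hψmem⟩ : rootSpace H ⇑ν)
      (by simpa using hψ0)).mp (finrank_rootSpace_eq_one _ hν) ⟨ξ, hξ⟩
  obtain ⟨d, hd⟩ := (finrank_eq_one_iff_of_nonzero' (⟨e, he⟩ : rootSpace H ⇑μ)
      (by simpa using isSl2.e_ne_zero)).mp (finrank_rootSpace_eq_one _ hμ) ⟨ζ, hζ⟩
  have hc' : c • ((toEnd ℂ L L f) ^ k) x = ξ := congrArg Subtype.val hc
  have hd' : d • e = ζ := congrArg Subtype.val hd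
  have hc0 : c ≠ 0 := by rintro rfl; apply hξ0; rw [← hc']; simp
  have hd0 : d ≠ 0 := by rintro rfl; apply hζ0; rw [← hd']; simp
  obtain ⟨j, hj⟩ : ∃ j, k = j + 1 := ⟨k - 1, by omega⟩
  have hebr : ⁅e, ((toEnd ℂ L L f) ^ k) x⁆
      = (((j : ℂ) + 1) * ((chainLength μ ν : ℂ) - j)) • ((toEnd ℂ L L f) ^ j) x := by
    rw [hj]; exact prim.lie_e_pow_succ_toEnd_f j
  have hcoeff : (((j : ℂ) + 1) * ((chainLength μ ν : ℂ) - j)) ≠ 0 := by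
    apply mul_ne_zero
    · have h' := Nat.cast_add_one_ne_zero (R := ℂ) j
      exact_mod_cast h'
    · rw [sub_ne_zero]
      intro hcontra
      have : (chainLength μ ν : ℕ) = j := by exact_mod_cast hcontra
      omega
  have hψj0 : ((toEnd ℂ L L f) ^ j) x ≠ 0 :=
    prim.pow_toEnd_f_ne_zero_of_eq_nat rfl (by omega)
  rw [← hc', ← hd', lie_smul, smul_lie, hebr]
  simp only [smul_smul]
  exact smul_ne_zero (by simp [hc0, hd0, hcoeff]) hψj0

end Key


/-- Let `μ` and `ν` be roots of a complex semisimple Lie algebra `g`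
(with `μ + ν ≠ 0`).  Then `[g_μ, g_ν] = g_{μ+ν}` (where `g_{μ+ν} = 0` when `μ+ν`
is not a root); in particular `μ + ν` is a root if and only if `⁅ζ, ξ⁆ ≠ 0` for
every nonzero `ζ ∈ g_μ` and every nonzero `ξ ∈ g_ν`. -/
theorem schur_flex_stmt2
    {L : Type*} [LieRing L] [LieAlgebra ℂ L] [FiniteDimensional ℂ L]
    [LieAlgebra.IsSemisimple ℂ L]
    (H : LieSubalgebra ℂ L) [H.IsCartanSubalgebra]
    (μ ν : LieModule.Weight ℂ H L) (hμ : μ.IsNonZero) (hν : ν.IsNonZero)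
    (hsum : (⇑μ + ⇑ν : H → ℂ) ≠ 0) :
    (LieAlgebra.rootSpace H (⇑μ + ⇑ν) : Submodule ℂ L) =
      Submodule.span ℂ {z : L | ∃ x ∈ LieAlgebra.rootSpace H ⇑μ,
        ∃ y ∈ LieAlgebra.rootSpace H ⇑ν, z = ⁅x, y⁆} ∧
    ((LieAlgebra.rootSpace H (⇑μ + ⇑ν) ≠ ⊥) ↔
      (∀ ζ ∈ LieAlgebra.rootSpace H ⇑μ, ζ ≠ 0 →
        ∀ ξ ∈ LieAlgebra.rootSpace H ⇑ν, ξ ≠ 0 → ⁅ζ, ξ⁆ ≠ 0)) := by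
  haveI : LieAlgebra.IsKilling ℂ L := isKilling_of_isSemisimple L
  have key := lie_ne_zero_key H μ ν hμ hν
  have hmaps : ∀ x ∈ LieAlgebra.rootSpace H ⇑μ, ∀ y ∈ LieAlgebra.rootSpace H ⇑ν,
      ⁅x, y⁆ ∈ LieAlgebra.rootSpace H (⇑μ + ⇑ν) := fun x hx y hy =>
    LieAlgebra.mapsTo_toEnd_genWeightSpace_add_of_mem_rootSpace ℂ L H L ⇑μ ⇑ν hx hy
  constructor
  · apply le_antisymm
    · by_cases hbot : LieAlgebra.rootSpace H (⇑μ + ⇑ν) = ⊥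
      · rw [hbot]; simp
      · obtain ⟨ζ, hζ, hζ0⟩ := μ.exists_ne_zero
        obtain ⟨ξ, hξ, hξ0⟩ := ν.exists_ne_zero
        have hz := hmaps ζ hζ ξ hξ
        have hz0 : ⁅ζ, ξ⁆ ≠ 0 := key hbot hζ hζ0 hξ hξ0
        have h1 : finrank ℂ (LieAlgebra.rootSpace H (⇑μ + ⇑ν)) = 1 :=
          LieAlgebra.IsKilling.finrank_rootSpace_eq_one
            (⟨⇑μ + ⇑ν, hbot⟩ : Weight ℂ H L) hsum
        intro w hw
        obtain ⟨t, ht⟩ := (finrank_eq_one_iff_of_nonzero'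
            (⟨⁅ζ, ξ⁆, hz⟩ : LieAlgebra.rootSpace H (⇑μ + ⇑ν))
            (by simpa using hz0)).mp h1 ⟨w, hw⟩
        have ht' : t • ⁅ζ, ξ⁆ = w := congrArg Subtype.val ht
        rw [← ht']
        exact Submodule.smul_mem _ t (Submodule.subset_span ⟨ζ, hζ, ξ, hξ, rfl⟩)
    · rw [Submodule.span_le]
      rintro z ⟨x, hx, y, hy, rfl⟩
      exact hmaps x hx y hy
  · constructor
    · intro hne ζ hζ hζ0 ξ hξ hξ0
      exact key hne hζ hζ0 hξ hξ0
    · intro hall hbot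
      obtain ⟨ζ, hζ, hζ0⟩ := μ.exists_ne_zero
      obtain ⟨ξ, hξ, hξ0⟩ := ν.exists_ne_zero
      apply hall ζ hζ hζ0 ξ hξ hξ0
      have hm := hmaps ζ hζ ξ hξ
      rw [hbot] at hm
      simpa using hm
end

section
/- Let λ be a size-n subset of {1, …, 2n} containing exactly one element of each pair {k, 2n+1−k}, listed in increasing order as λ₁ < ⋯ < λ_n. Decompose λ into maximal blocks of consecutive integers μ_p, …, μ₁, μ₀ (from smallest to largest values read as μ_p ⋯ μ₀ with μ_p containing λ₁). If λ₁ > 1 (equivalently λ_n = 2n), then for all ℓ, m with ℓ + m = p + 1, the last element of block μ_ℓ plus the last element of block μ_m equals 2n. -/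
lemma sorted_pair_sum (c : ℕ) (T : Finset ℕ)
    (hle : ∀ x ∈ T, x ≤ c) (hcl : ∀ x ∈ T, c - x ∈ T) :
    ∀ i j : ℕ, i < (Finset.sort T (· ≤ ·)).length → j < (Finset.sort T (· ≤ ·)).length →
      i + j + 1 = (Finset.sort T (· ≤ ·)).length →
      (Finset.sort T (· ≤ ·)).getD i 0 + (Finset.sort T (· ≤ ·)).getD j 0 = c := by
  intro i j hi hj hij
  set l := Finset.sort T (· ≤ ·) with hl
  have hinj : Set.InjOn (fun x => c - x) T := by
    intro a ha b hb hab
    have := hle a ha; have := hle b hb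
    simp only at hab; omega
  have himg : T.image (fun x => c - x) = T := by
    apply Finset.eq_of_subset_of_card_le
    · intro y hy
      simp only [Finset.mem_image] at hy
      obtain ⟨x, hx, rfl⟩ := hy
      exact hcl x hx
    · exact le_of_eq (Finset.card_image_of_injOn hinj).symm
  have hperm : l.Perm ((l.map (fun x => c - x)).reverse) := by
    refine List.Perm.trans ?_ (List.reverse_perm _).symm
    have h1 : ((l.map (fun x => c - x) : List ℕ) : Multiset ℕ) = (l : Multiset ℕ) := by
      rw [← Multiset.map_coe, Finset.sort_eq, ← Finset.image_val_of_injOn hinj, himg]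
    exact (Multiset.coe_eq_coe.mp h1).symm
  have hsor : ((l.map (fun x => c - x)).reverse).Pairwise (· ≤ ·) := by
    rw [List.pairwise_reverse, List.pairwise_map]
    exact (Finset.pairwise_sort T (· ≤ ·)).imp (fun h => Nat.sub_le_sub_left h c)
  have key : l = (l.map (fun x => c - x)).reverse :=
    List.Perm.eq_of_pairwise' (Finset.pairwise_sort T (· ≤ ·)) hsor hperm
  have hlen : (l.map (fun x => c - x)).length = l.length := by simp
  have hi' : i < ((l.map (fun x => c - x)).reverse).length := by simpa [hlen] using hi
  have h2 : l.getD i 0 = c - l.getD j 0 := by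
    conv_lhs => rw [key]
    rw [List.getD_eq_getElem _ _ hi', List.getD_eq_getElem _ _ hj]
    rw [List.getElem_reverse, List.getElem_map]
    have hK : (List.map (fun x => c - x) l).length - 1 - i = j := by
      rw [List.length_map]; omega
    simp only [hK]
  have hjmem : l.getD j 0 ∈ T := by
    rw [List.getD_eq_getElem _ _ hj]
    exact (Finset.mem_sort _).mp (List.getElem_mem _)
  have := hle _ hjmem
  omega

/-- Let `λ` (encoded as a finite set `S`) be a size-`n` subset of
`{1, …, 2n}` containing exactly one element of each pair `{k, 2n+1−k}`, decomposed
into maximal blocks `μ_p, …, μ₁, μ₀` of consecutive integers (with `μ_p` containing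
the smallest element).  Suppose `λ₁ > 1` (i.e. `1 ∉ S`).  Then for all `ℓ, m` with
`ℓ + m = p + 1`, the last element of `μ_ℓ` plus the last element of `μ_m` equals
`2n`.  Here the last elements of the blocks are exactly the `b ∈ S` with
`b + 1 ∉ S`, listed in increasing order as `l`, and the index pairing
`ℓ + m = p + 1` becomes `i + j + 2 = l.length` for the increasing list `l`. -/
theorem schur_flex_stmt12 (n : ℕ) (S : Finset ℕ)
    (hcard : S.card = n)
    (hsub : ∀ j ∈ S, 1 ≤ j ∧ j ≤ 2 * n)
    (hsym : ∀ j, 1 ≤ j → j ≤ 2 * n → (j ∈ S ↔ (2 * n + 1 - j) ∉ S))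
    (h1 : 1 ∉ S) :
    ∀ i j : ℕ,
      i < (Finset.sort (S.filter fun b => b + 1 ∉ S) (· ≤ ·)).length →
      j < (Finset.sort (S.filter fun b => b + 1 ∉ S) (· ≤ ·)).length →
      i + j + 2 = (Finset.sort (S.filter fun b => b + 1 ∉ S) (· ≤ ·)).length →
      (Finset.sort (S.filter fun b => b + 1 ∉ S) (· ≤ ·)).getD i 0 +
        (Finset.sort (S.filter fun b => b + 1 ∉ S) (· ≤ ·)).getD j 0 = 2 * n := by
  intro i j hi hj hij
  set B := S.filter fun b => b + 1 ∉ S with hB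
  -- n ≥ 1
  have hn : 1 ≤ n := by
    by_contra hn
    have : n = 0 := by omega
    subst this
    have : S = ∅ := Finset.card_eq_zero.mp hcard
    have : B = ∅ := by rw [hB, this]; simp
    rw [this] at hij
    simp at hij
  have h2n : 2 * n ∈ S := by
    have := hsym (2 * n) (by omega) le_rfl
    have h : 2 * n + 1 - 2 * n = 1 := by omega
    rw [h] at this
    exact this.mpr h1
  have h2nB : 2 * n ∈ B := by
    rw [hB, Finset.mem_filter]
    refine ⟨h2n, fun hc => ?_⟩
    have := (hsub _ hc).2; omega
  set T := B.erase (2 * n) with hT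
  have hTle : ∀ x ∈ T, x ≤ 2 * n := by
    intro x hx
    rw [hT, Finset.mem_erase, hB, Finset.mem_filter] at hx
    exact (hsub x hx.2.1).2
  have hTcl : ∀ x ∈ T, 2 * n - x ∈ T := by
    intro x hx
    rw [hT, Finset.mem_erase, hB, Finset.mem_filter] at hx
    obtain ⟨hne, hxS, hx1⟩ := hx
    obtain ⟨hx1', hx2'⟩ := hsub x hxS
    have hxlt : x < 2 * n := lt_of_le_of_ne hx2' hne
    rw [hT, Finset.mem_erase, hB, Finset.mem_filter]
    refine ⟨by omega, ?_, ?_⟩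
    · have := hsym (x + 1) (by omega) (by omega)
      have h : 2 * n + 1 - (x + 1) = 2 * n - x := by omega
      rw [h] at this
      by_contra hc
      exact hx1 (this.mpr hc)
    · have := (hsym x hx1' hx2').mp hxS
      have h : 2 * n - x + 1 = 2 * n + 1 - x := by omega
      rw [h]
      exact this
  -- sort B = sort T ++ [2n]
  have hins : insert (2 * n) T = B := Finset.insert_erase h2nB
  have hkey : Finset.sort B (· ≤ ·) = Finset.sort T (· ≤ ·) ++ [2 * n] := by
    refine (fun hp hs => List.Perm.eq_of_pairwise' (Finset.pairwise_sort B (· ≤ ·)) hs hp) ?_ ?_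
    · have h1' : ((Finset.sort T (· ≤ ·) ++ [2 * n] : List ℕ) : Multiset ℕ)
          = (Finset.sort B (· ≤ ·) : Multiset ℕ) := by
        rw [← hins]
        have h2nT : 2 * n ∉ T := Finset.notMem_erase _ _
        rw [← Multiset.coe_add, Finset.sort_eq, Finset.sort_eq, Multiset.coe_singleton,
          Finset.insert_val_of_notMem h2nT, add_comm, Multiset.singleton_add]
      exact (Multiset.coe_eq_coe.mp h1').symm
    · rw [List.pairwise_append]
      refine ⟨Finset.pairwise_sort _ _, List.pairwise_singleton _ _, ?_⟩
      intro x hx y hy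
      simp at hy
      subst hy
      exact hTle x ((Finset.mem_sort _).mp hx)
  rw [hkey] at hi hj hij ⊢
  simp only [List.length_append, List.length_singleton] at hi hj hij
  have hiT : i < (Finset.sort T (· ≤ ·)).length := by omega
  have hjT : j < (Finset.sort T (· ≤ ·)).length := by omega
  rw [List.getD_eq_getElem _ _ (by simp only [List.length_append, List.length_singleton]; omega),
    List.getD_eq_getElem _ _ (by simp only [List.length_append, List.length_singleton]; omega),
    List.getElem_append_left hiT, List.getElem_append_left hjT,
    ← List.getD_eq_getElem _ 0 hiT, ← List.getD_eq_getElem _ 0 hjT]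
  exact sorted_pair_sum (2 * n) T hTle hTcl i j hiT hjT (by omega)
end
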